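/- For all real α > 0 and all real a ≥ 0, ∫₀^∞ e^{-αt} · e^{-a²/(2t)} / √(2πt) dt = (1/√(2α)) e^{-√(2α)·a}. -/

import Mathlib

open MeasureTheory Real Set

lemma contK (p q : ℝ) :
    ContinuousOn (fun s => Real.exp (-(p*s - q/s)^2)) (Ioi (0:ℝ)) := by
  fun_prop (disch := intro x hx; exact ne_of_gt hx)

lemma integrableK {p q : ℝ} (hp : 0 < p) :
    IntegrableOn (fun s => Real.exp (-(p*s - q/s)^2)) (Ioi (0:ℝ)) := by
  have hb : Integrable (fun s : ℝ => Real.exp (2*p*q) * Real.exp (-(p^2) * s^2)) :=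
    (integrable_exp_neg_mul_sq (by positivity)).const_mul _
  refine Integrable.mono' hb.restrict ?_ ?_
  · exact (contK p q).aestronglyMeasurable measurableSet_Ioi
  · filter_upwards [ae_restrict_mem measurableSet_Ioi] with s hs
    rw [Real.norm_eq_abs, abs_of_nonneg (exp_nonneg _), ← Real.exp_add]
    apply Real.exp_le_exp.mpr
    have h1 : (0:ℝ) ≤ (q/s)^2 := sq_nonneg _
    have hs0 : (0:ℝ) < s := hs
    have : (p*s - q/s)^2 = p^2*s^2 - 2*p*q + (q/s)^2 := by
      field_simp; ring
    nlinarith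

-- derivative facts
lemma derivF {p q : ℝ} {s : ℝ} (hs : s ∈ Ioi (0:ℝ)) :
    HasDerivWithinAt (fun s => p*s - q/s) (p + q/s^2) (Ioi 0) s := by
  have h : HasDerivAt (fun s : ℝ => p*s - q/s) (p + q/s^2) s := by
    have h1 : HasDerivAt (fun s : ℝ => p*s) p s := by
      simpa using (hasDerivAt_id s).const_mul p
    have h2 : HasDerivAt (fun s : ℝ => q/s) (q * (-(s^2)⁻¹)) s := by
      simpa [div_eq_mul_inv] using (hasDerivAt_inv (ne_of_gt hs)).const_mul q
    have := h1.sub h2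
    exact this.congr_deriv (by ring)
  exact h.hasDerivWithinAt

lemma derivG {p q : ℝ} {s : ℝ} (hs : s ∈ Ioi (0:ℝ)) :
    HasDerivWithinAt (fun s => q/(p*s)) (-(q/p)/s^2) (Ioi 0) s := by
  have h : HasDerivAt (fun s : ℝ => (q/p)*s⁻¹) ((q/p) * (-(s^2)⁻¹)) s :=
    (hasDerivAt_inv (ne_of_gt hs)).const_mul (q/p)
  have h2 : HasDerivAt (fun s : ℝ => q/(p*s)) ((q/p) * (-(s^2)⁻¹)) s := by
    convert h using 2 with s
    rw [div_mul_eq_div_div, div_eq_mul_inv]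
  exact h2.hasDerivWithinAt.congr_deriv (by ring)

lemma imageF {p q : ℝ} (hp : 0 < p) (hq : 0 < q) :
    (fun s => p*s - q/s) '' Ioi (0:ℝ) = univ := by
  apply eq_univ_of_forall
  intro y
  set r := Real.sqrt (y^2 + 4*p*q) with hr
  have hr2 : r^2 = y^2 + 4*p*q := Real.sq_sqrt (by nlinarith)
  have hr0 : 0 ≤ r := Real.sqrt_nonneg _
  have hyr : 0 < y + r := by nlinarith
  refine ⟨(y + r)/(2*p), ?_, ?_⟩
  · exact div_pos hyr (by linarith)
  · have h2p : (2*p) ≠ 0 := by positivity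
    have hs0 : (y+r)/(2*p) ≠ 0 := ne_of_gt (div_pos hyr (by linarith))
    field_simp
    nlinarith [hr2]

lemma imageG {p q : ℝ} (hp : 0 < p) (hq : 0 < q) :
    (fun s => q/(p*s)) '' Ioi (0:ℝ) = Ioi (0:ℝ) := by
  ext y
  simp only [mem_image, mem_Ioi]
  constructor
  · rintro ⟨s, hs, rfl⟩; positivity
  · intro hy
    refine ⟨q/(p*y), by positivity, ?_⟩
    field_simp

lemma imageSq : (fun s : ℝ => s^2) '' Ioi (0:ℝ) = Ioi (0:ℝ) := by
  ext y
  simp only [mem_image, mem_Ioi]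
  constructor
  · rintro ⟨s, hs, rfl⟩; positivity
  · intro hy
    exact ⟨Real.sqrt y, Real.sqrt_pos.mpr hy, Real.sq_sqrt hy.le⟩

lemma injF {p q : ℝ} (hp : 0 < p) (hq : 0 ≤ q) :
    InjOn (fun s => p*s - q/s) (Ioi (0:ℝ)) := by
  have : StrictMonoOn (fun s => p*s - q/s) (Ioi (0:ℝ)) := by
    intro x hx y hy hxy
    have hx0 : (0:ℝ) < x := hx
    have hy0 : (0:ℝ) < y := hy
    have h1 : p*x < p*y := by nlinarith
    have h2 : q/y ≤ q/x := div_le_div_of_nonneg_left ?_ ?_ ?_ |>.trans_eq rfl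
    · simp only; linarith
    · exact hq
    · exact hx0
    · exact hxy.le
  exact this.injOn

lemma injG {p q : ℝ} (hp : 0 < p) (hq : 0 < q) :
    InjOn (fun s => q/(p*s)) (Ioi (0:ℝ)) := by
  intro x hx y hy hxy
  have hx0 : (0:ℝ) < x := hx
  have hy0 : (0:ℝ) < y := hy
  field_simp at hxy
  exact hxy.symm

lemma injSq : InjOn (fun s : ℝ => s^2) (Ioi (0:ℝ)) := by
  intro x hx y hy hxy
  have hx0 : (0:ℝ) < x := hx
  have hy0 : (0:ℝ) < y := hy
  simp only at hxy
  have habs : |x| = |y| := by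
    rw [← Real.sqrt_sq_eq_abs, ← Real.sqrt_sq_eq_abs, hxy]
  rwa [abs_of_pos hx0, abs_of_pos hy0] at habs

lemma gaussK {p q : ℝ} (hp : 0 < p) (hq : 0 ≤ q) :
    ∫ s in Ioi (0:ℝ), Real.exp (-(p*s - q/s)^2) = Real.sqrt π / (2*p) := by
  rcases eq_or_lt_of_le hq with h0 | hq
  · have heq : EqOn (fun s : ℝ => Real.exp (-(p*s - q/s)^2))
        (fun s : ℝ => Real.exp (-(p^2) * s^2)) (Ioi 0) := by
      intro s hs
      simp only [← h0]
      norm_num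
      ring_nf
    rw [setIntegral_congr_fun measurableSet_Ioi heq, integral_gaussian_Ioi,
      Real.sqrt_div pi_pos.le, Real.sqrt_sq hp.le]
    ring
  · set c : ℝ → ℝ := fun s => (q/p)/s^2 with hc
    set E : ℝ → ℝ := fun s => Real.exp (-(p*s - q/s)^2) with hE
    have hsubG := integral_image_eq_integral_abs_deriv_smul measurableSet_Ioi
      (fun s hs => derivG (p := p) (q := q) hs) (injG hp hq) E
    rw [imageG hp hq] at hsubG
    have hRW : EqOn (fun s => |(-(q/p)/s^2)| • E (q/(p*s))) (fun s => c s * E s) (Ioi (0:ℝ)) := by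
      intro s hs
      have hs0 : (0:ℝ) < s := hs
      have h1 : p*(q/(p*s)) - q/(q/(p*s)) = -(p*s - q/s) := by
        field_simp
        ring
      simp only [hE, hc, smul_eq_mul, h1, neg_sq]
      congr 1
      rw [neg_div, abs_neg, abs_of_nonneg (by positivity)]
    rw [setIntegral_congr_fun measurableSet_Ioi hRW] at hsubG
    have hIexp : IntegrableOn E (Ioi 0) := integrableK hp
    have hI2 : IntegrableOn (fun s => c s * E s) (Ioi (0:ℝ)) := by
      have h0 := (integrableOn_image_iff_integrableOn_abs_deriv_smul measurableSet_Ioi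
        (fun s hs => derivG (p := p) (q := q) hs) (injG hp hq) E).mp
      rw [imageG hp hq] at h0
      exact (h0 hIexp).congr_fun hRW measurableSet_Ioi
    have hsubF := integral_image_eq_integral_abs_deriv_smul measurableSet_Ioi
      (fun s hs => derivF (p := p) (q := q) hs) (injF hp hq.le) (fun u => Real.exp (-u^2))
    rw [imageF hp hq] at hsubF
    have hL : ∫ x in (univ : Set ℝ), Real.exp (-x^2) = Real.sqrt π := by
      rw [Measure.restrict_univ]
      simpa using integral_gaussian 1
    have hRW2 : EqOn (fun s => |p + q/s^2| • E s)
        (fun s => p * E s + p * (c s * E s)) (Ioi (0:ℝ)) := by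
      intro s hs
      have hs0 : (0:ℝ) < s := hs
      have habs : |p + q/s^2| = p + q/s^2 := abs_of_pos (by positivity)
      simp only [smul_eq_mul, habs, hc]
      field_simp
    rw [hL, setIntegral_congr_fun measurableSet_Ioi hRW2] at hsubF
    rw [integral_add (hIexp.const_mul p) (hI2.const_mul p), integral_const_mul, integral_const_mul] at hsubF
    rw [← hsubG] at hsubF
    show (∫ s in Ioi (0:ℝ), E s) = Real.sqrt π / (2*p)
    field_simp
    linarith

/-- For α > 0 and a ≥ 0,
∫₀^∞ e^{-αt} e^{-a²/(2t)} / √(2πt) dt = (1/√(2α)) e^{-√(2α) a}. -/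
theorem stmt1 (α a : ℝ) (hα : 0 < α) (ha : 0 ≤ a) :
    ∫ t in Ioi (0:ℝ),
        Real.exp (-α * t) * Real.exp (-a ^ 2 / (2 * t)) / Real.sqrt (2 * π * t)
      = (1 / Real.sqrt (2 * α)) * Real.exp (-Real.sqrt (2 * α) * a) := by
  set p : ℝ := Real.sqrt α with hpdef
  set q : ℝ := a / Real.sqrt 2 with hqdef
  have hp : 0 < p := Real.sqrt_pos.mpr hα
  have hq : 0 ≤ q := div_nonneg ha (Real.sqrt_nonneg 2)
  have h2 : (0:ℝ) < Real.sqrt 2 := Real.sqrt_pos.mpr two_pos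
  have h22 : Real.sqrt 2 ^ 2 = 2 := Real.sq_sqrt two_pos.le
  have hp2 : p^2 = α := Real.sq_sqrt hα.le
  have hq2 : q^2 = a^2/2 := by
    rw [hqdef, div_pow, Real.sq_sqrt two_pos.le]
  have hc0 : Real.sqrt (2*α) = Real.sqrt 2 * p := Real.sqrt_mul two_pos.le α
  have hpq : 2*(p*q) = Real.sqrt (2*α) * a := by
    rw [hc0, hqdef]
    field_simp
    linear_combination a * h22.symm
  clear_value p q
  have step1 : EqOn (fun t : ℝ =>
      Real.exp (-α * t) * Real.exp (-a ^ 2 / (2 * t)) / Real.sqrt (2 * π * t))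
      (fun t : ℝ => (Real.exp (-Real.sqrt (2*α) * a) / Real.sqrt (2*π)) *
        (Real.exp (-(p*Real.sqrt t - q/Real.sqrt t)^2) / Real.sqrt t)) (Ioi 0) := by
    intro t ht
    have ht0 : (0:ℝ) < t := ht
    have hsplit : Real.sqrt (2*π*t) = Real.sqrt (2*π) * Real.sqrt t := by
      rw [Real.sqrt_mul (by positivity)]
    set u := Real.sqrt t with hudef
    have hst : (0:ℝ) < u := Real.sqrt_pos.mpr ht0
    have hu2 : u^2 = t := Real.sq_sqrt ht0.le
    clear_value u
    have hexpand : (p*u - q/u)^2 = p^2*u^2 - 2*(p*q) + q^2/u^2 := by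
      field_simp
      ring
    have key : Real.exp (-(p*u - q/u)^2)
        = Real.exp (Real.sqrt (2*α) * a) * (Real.exp (-α*t) * Real.exp (-a^2/(2*t))) := by
      rw [← Real.exp_add, ← Real.exp_add]
      congr 1
      rw [hexpand, hu2, hp2, hq2, hpq]
      field_simp
      ring
    have hee : Real.exp (-Real.sqrt (2*α) * a) * Real.exp (Real.sqrt (2*α) * a) = 1 := by
      rw [← Real.exp_add]
      norm_num
    simp only [← hudef, key, hsplit]
    rw [show (Real.exp (-Real.sqrt (2*α) * a) / Real.sqrt (2*π)) *
        ((Real.exp (Real.sqrt (2*α)*a) * (Real.exp (-α*t) * Real.exp (-a^2/(2*t)))) / u)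
        = (Real.exp (-Real.sqrt (2*α) * a) * Real.exp (Real.sqrt (2*α)*a)) *
          (Real.exp (-α*t) * Real.exp (-a^2/(2*t)) / (Real.sqrt (2*π) * u)) from by ring,
      hee, one_mul]
  rw [setIntegral_congr_fun measurableSet_Ioi step1, integral_const_mul]
  have hderiv : ∀ s ∈ Ioi (0:ℝ), HasDerivWithinAt (fun s : ℝ => s^2) (2*s) (Ioi 0) s := by
    intro s hs
    simpa using (hasDerivAt_pow 2 s).hasDerivWithinAt
  have hsub := integral_image_eq_integral_abs_deriv_smul measurableSet_Ioi hderiv injSq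
    (fun t => Real.exp (-(p*Real.sqrt t - q/Real.sqrt t)^2) / Real.sqrt t)
  rw [imageSq] at hsub
  rw [hsub]
  have step2 : EqOn (fun s : ℝ => |2*s| • (Real.exp (-(p*Real.sqrt (s^2) - q/Real.sqrt (s^2))^2) / Real.sqrt (s^2)))
      (fun s : ℝ => 2 * Real.exp (-(p*s - q/s)^2)) (Ioi 0) := by
    intro s hs
    have hs0 : (0:ℝ) < s := hs
    have hss : Real.sqrt (s^2) = s := Real.sqrt_sq hs0.le
    simp only [hss, smul_eq_mul, abs_of_pos (by positivity : (0:ℝ) < 2*s)]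
    field_simp
  rw [setIntegral_congr_fun measurableSet_Ioi step2, integral_const_mul, gaussK hp hq]
  rw [hc0]
  have hπ : (0:ℝ) < Real.sqrt π := Real.sqrt_pos.mpr pi_pos
  have h2π : Real.sqrt (2*π) = Real.sqrt 2 * Real.sqrt π := Real.sqrt_mul two_pos.le π
  rw [h2π]
  field_simp
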